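/- Let t ∈ ℝ, p ∈ [0,1], and let E₀ = √p·I₂, E₁ = √(1−p)·σ_z be the Phase Flip Kraus operators. Set M_k := U_qs(t)† · (E_k ⊗ I₄) for k = 0,1, where ⊗ is the Kronecker product and I₄ the 4×4 identity (noise acting on the first of the three qubits). Then the average fidelity F_avg := (1/(8·9))·(tr(M₀†M₀ + M₁†M₁) + |tr M₀|² + |tr M₁|²) equals (1/18)·(p·(cos(t) + 3)² + 2). -/

import Mathlib

open Matrix Complex

/-- The Hamiltonian of the quantum qubit switch: the 8×8 complex matrix whose only
nonzero entries are `(H_qs)_{3,5} = (H_qs)_{5,3} = 1`. -/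
noncomputable def Hqs : Matrix (Fin 8) (Fin 8) ℂ :=
  Matrix.of fun i j =>
    if (i = 3 ∧ j = 5) ∨ (i = 5 ∧ j = 3) then 1 else 0

/-- The time-evolution operator `U_qs(t) = exp(−i t H_qs)` (matrix exponential). -/
noncomputable def Uqs (t : ℝ) : Matrix (Fin 8) (Fin 8) ℂ :=
  NormedSpace.exp ((-(Complex.I * (t : ℂ))) • Hqs)

/-- Kronecker product `E ⊗ I₄` of a one-qubit operator E with the identity on the
remaining two qubits: entry (4a+r, 4b+c) is `E a b · δ_{r c}`. -/
noncomputable def kronI4 (E : Matrix (Fin 2) (Fin 2) ℂ) : Matrix (Fin 8) (Fin 8) ℂ :=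
  Matrix.of fun r c =>
    E ⟨r.val / 4, by omega⟩ ⟨c.val / 4, by omega⟩ *
      (if r.val % 4 = c.val % 4 then 1 else 0)

/-- The Pauli Z matrix. -/
def σz : Matrix (Fin 2) (Fin 2) ℂ := !![1, 0; 0, -1]

/-- First Kraus operator of the Phase Flip channel. -/
noncomputable def E₀PF (p : ℝ) : Matrix (Fin 2) (Fin 2) ℂ :=
  ((Real.sqrt p : ℝ) : ℂ) • (1 : Matrix (Fin 2) (Fin 2) ℂ)

/-- Second Kraus operator of the Phase Flip channel. -/
noncomputable def E₁PF (p : ℝ) : Matrix (Fin 2) (Fin 2) ℂ :=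
  ((Real.sqrt (1 - p) : ℝ) : ℂ) • σz

/-! ### Auxiliary machinery -/

/-- Diagonalizing matrix for `Hqs` (unnormalized). -/
def Vmix : Matrix (Fin 8) (Fin 8) ℂ :=
  Matrix.of fun i j =>
    if (i = 3 ∧ j = 3) ∨ (i = 3 ∧ j = 5) ∨ (i = 5 ∧ j = 3) then 1
    else if i = 5 ∧ j = 5 then -1
    else if i = j then 1 else 0

/-- Inverse of `Vmix`. -/
noncomputable def Wmix : Matrix (Fin 8) (Fin 8) ℂ :=
  Matrix.of fun i j =>
    if (i = 3 ∧ j = 3) ∨ (i = 3 ∧ j = 5) ∨ (i = 5 ∧ j = 3) then 2⁻¹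
    else if i = 5 ∧ j = 5 then -2⁻¹
    else if i = j then 1 else 0

/-- Diagonal of `-(it)·Hqs` in the eigenbasis. -/
noncomputable def Dd (t : ℝ) : Fin 8 → ℂ :=
  fun i => if i = 3 then -(Complex.I * t) else if i = 5 then Complex.I * t else 0

/-- Explicit closed form of `Uqs t`. -/
noncomputable def Uex (t : ℝ) : Matrix (Fin 8) (Fin 8) ℂ :=
  Matrix.of fun i j =>
    if (i = 3 ∧ j = 5) ∨ (i = 5 ∧ j = 3) then -(Complex.I * (Real.sin t : ℂ))
    else if i = j then (if i = 3 ∨ i = 5 then ((Real.cos t : ℝ) : ℂ) else 1) else 0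

/-- σz ⊗ I₄ as an 8×8 diagonal matrix. -/
def Z8 : Matrix (Fin 8) (Fin 8) ℂ :=
  Matrix.diagonal (fun i => if i.val < 4 then 1 else -1)

set_option maxHeartbeats 1000000 in
lemma hVinv_mul : Vmix * Wmix = 1 := by
  ext i j
  fin_cases i <;> fin_cases j <;>
    simp [Vmix, Wmix, Matrix.mul_apply, Fin.sum_univ_eight, Matrix.one_apply] <;> norm_num

lemma hVinv : Vmix⁻¹ = Wmix := Matrix.inv_eq_right_inv hVinv_mul

set_option maxHeartbeats 2000000 in
lemma hA (t : ℝ) : (-(Complex.I * (t : ℂ))) • Hqs = Vmix * Matrix.diagonal (Dd t) * Vmix⁻¹ := by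
  rw [hVinv]
  ext i j
  fin_cases i <;> fin_cases j <;>
    simp [Vmix, Wmix, Hqs, Dd, Matrix.mul_apply, Fin.sum_univ_eight,
      Matrix.diagonal, Matrix.smul_apply] <;> ring

set_option maxHeartbeats 2000000 in
lemma hU (t : ℝ) : Uqs t = Uex t := by
  have hue : Uqs t = Vmix * Matrix.diagonal (fun i => NormedSpace.exp (Dd t i)) * Vmix⁻¹ := by
    rw [Uqs, hA, Matrix.exp_conj Vmix (Matrix.diagonal (Dd t))
      (@isUnit_of_invertible _ _ Vmix (invertibleOfRightInverse _ _ hVinv_mul)),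
      Matrix.exp_diagonal, Pi.exp_def]
  rw [hue, hVinv]
  have he1 : NormedSpace.exp (Complex.I * (t:ℂ)) = (Real.cos t : ℂ) + (Real.sin t : ℂ) * Complex.I := by
    rw [← Complex.exp_eq_exp_ℂ, mul_comm, Complex.exp_mul_I, Complex.ofReal_cos, Complex.ofReal_sin]
  have he2 : NormedSpace.exp (-(Complex.I * (t:ℂ))) = (Real.cos t : ℂ) - (Real.sin t : ℂ) * Complex.I := by
    rw [← Complex.exp_eq_exp_ℂ, show -(Complex.I * (t:ℂ)) = ((-t : ℝ):ℂ) * Complex.I by push_cast; ring,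
      Complex.exp_mul_I, Complex.ofReal_neg, Complex.cos_neg, Complex.sin_neg,
      Complex.ofReal_cos, Complex.ofReal_sin]
    ring
  ext i j
  fin_cases i <;> fin_cases j <;>
    simp [Vmix, Wmix, Uex, Dd, he1, he2, Matrix.mul_apply, Fin.sum_univ_eight,
      Matrix.diagonal] <;> ring

set_option maxHeartbeats 1000000 in
lemma hK0 (p : ℝ) : kronI4 (E₀PF p) = ((Real.sqrt p : ℝ) : ℂ) • (1 : Matrix (Fin 8) (Fin 8) ℂ) := by
  ext i j
  fin_cases i <;> fin_cases j <;>
    simp [kronI4, E₀PF, Matrix.one_apply, Matrix.smul_apply,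
      show ((0:Fin 8)).val = 0 from rfl, show ((1:Fin 8)).val = 1 from rfl,
      show ((2:Fin 8)).val = 2 from rfl, show ((3:Fin 8)).val = 3 from rfl,
      show ((4:Fin 8)).val = 4 from rfl, show ((5:Fin 8)).val = 5 from rfl,
      show ((6:Fin 8)).val = 6 from rfl, show ((7:Fin 8)).val = 7 from rfl,
      Fin.mk_zero, Fin.mk_one, Matrix.one_apply]

set_option maxHeartbeats 1000000 in
lemma hK1 (p : ℝ) : kronI4 (E₁PF p) = ((Real.sqrt (1 - p) : ℝ) : ℂ) • Z8 := by
  ext i j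
  fin_cases i <;> fin_cases j <;>
    simp [kronI4, E₁PF, σz, Z8, Matrix.diagonal_apply, Matrix.smul_apply,
      show ((0:Fin 8)).val = 0 from rfl, show ((1:Fin 8)).val = 1 from rfl,
      show ((2:Fin 8)).val = 2 from rfl, show ((3:Fin 8)).val = 3 from rfl,
      show ((4:Fin 8)).val = 4 from rfl, show ((5:Fin 8)).val = 5 from rfl,
      show ((6:Fin 8)).val = 6 from rfl, show ((7:Fin 8)).val = 7 from rfl,
      Fin.mk_zero, Fin.mk_one]

lemma hZZ : Z8 * Z8 = 1 := by
  rw [Z8, Matrix.diagonal_mul_diagonal]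
  ext i j
  rcases eq_or_ne i j with rfl | h
  · simp only [Matrix.diagonal_apply_eq, Matrix.one_apply_eq]
    split <;> norm_num
  · simp [Matrix.diagonal_apply_ne _ h, Matrix.one_apply_ne h]

lemma hZH : Z8ᴴ = Z8 := by
  ext i j
  simp only [Z8, Matrix.conjTranspose_apply, Matrix.diagonal_apply]
  split_ifs with h h2 h3 <;> simp_all <;> try omega

set_option maxHeartbeats 2000000 in
lemma hUU (t : ℝ) : Uex t * (Uex t)ᴴ = 1 := by
  ext i j
  fin_cases i <;> fin_cases j <;>
    simp [Uex, Matrix.mul_apply, Matrix.conjTranspose_apply, Fin.sum_univ_eight,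
      Matrix.one_apply, Complex.ext_iff, Complex.cos_ofReal_re, Complex.sin_ofReal_re,
      Complex.cos_ofReal_im, Complex.sin_ofReal_im] <;>
    nlinarith [Real.sin_sq_add_cos_sq t]

set_option maxHeartbeats 400000 in
lemma htrU (t : ℝ) : ((Uex t)ᴴ).trace = 6 + 2 * ((Real.cos t : ℝ):ℂ) := by
  simp [Matrix.trace, Matrix.conjTranspose_apply, Uex, Fin.sum_univ_eight, Matrix.diag,
    -Complex.ofReal_cos, Complex.conj_ofReal]
  ring

set_option maxHeartbeats 400000 in
lemma htrUZ (t : ℝ) : ((Uex t)ᴴ * Z8).trace = 0 := by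
  simp [Matrix.trace, Matrix.mul_apply, Matrix.conjTranspose_apply, Uex, Z8,
    Matrix.diagonal_apply, Fin.sum_univ_eight, Matrix.diag,
    show ((0:Fin 8)).val = 0 from rfl, show ((1:Fin 8)).val = 1 from rfl,
    show ((2:Fin 8)).val = 2 from rfl, show ((3:Fin 8)).val = 3 from rfl,
    show ((4:Fin 8)).val = 4 from rfl, show ((5:Fin 8)).val = 5 from rfl,
    show ((6:Fin 8)).val = 6 from rfl, show ((7:Fin 8)).val = 7 from rfl]
  ring

/-- Average fidelity of the quantum switch under Phase Flip noise on the first qubit: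
F_avg = (1/18)·(p·(cos t + 3)² + 2). -/
theorem average_fidelity_phase_flip (t : ℝ) (p : ℝ) (hp₀ : 0 ≤ p) (hp₁ : p ≤ 1) :
    (1 / (8 * 9) : ℂ) *
      ((((Uqs t)ᴴ * kronI4 (E₀PF p))ᴴ * ((Uqs t)ᴴ * kronI4 (E₀PF p))
        + ((Uqs t)ᴴ * kronI4 (E₁PF p))ᴴ * ((Uqs t)ᴴ * kronI4 (E₁PF p))).trace
      + ((‖((Uqs t)ᴴ * kronI4 (E₀PF p)).trace‖ ^ 2 : ℝ) : ℂ)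
      + ((‖((Uqs t)ᴴ * kronI4 (E₁PF p)).trace‖ ^ 2 : ℝ) : ℂ)) =
    ((1 / 18 * (p * (Real.cos t + 3) ^ 2 + 2) : ℝ) : ℂ) := by
  set c₀ : ℂ := ((Real.sqrt p : ℝ) : ℂ) with hc₀
  set c₁ : ℂ := ((Real.sqrt (1 - p) : ℝ) : ℂ) with hc₁
  have hM0 : (Uqs t)ᴴ * kronI4 (E₀PF p) = c₀ • (Uex t)ᴴ := by
    rw [hU, hK0, Matrix.mul_smul, Matrix.mul_one]
  have hM1 : (Uqs t)ᴴ * kronI4 (E₁PF p) = c₁ • ((Uex t)ᴴ * Z8) := by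
    rw [hU, hK1, Matrix.mul_smul]
  have hcc0 : star c₀ * c₀ = ((p : ℝ) : ℂ) := by
    rw [hc₀, Complex.star_def, Complex.conj_ofReal, ← Complex.ofReal_mul,
      Real.mul_self_sqrt hp₀]
  have hcc1 : star c₁ * c₁ = (((1 - p) : ℝ) : ℂ) := by
    rw [hc₁, Complex.star_def, Complex.conj_ofReal, ← Complex.ofReal_mul,
      Real.mul_self_sqrt (by linarith)]
  have e0 : (c₀ • (Uex t)ᴴ)ᴴ * (c₀ • (Uex t)ᴴ) = ((p : ℝ) : ℂ) • (1 : Matrix (Fin 8) (Fin 8) ℂ) := by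
    rw [Matrix.conjTranspose_smul, Matrix.conjTranspose_conjTranspose,
      Matrix.smul_mul, Matrix.mul_smul, hUU, smul_smul, hcc0]
  have e1 : (c₁ • ((Uex t)ᴴ * Z8))ᴴ * (c₁ • ((Uex t)ᴴ * Z8))
      = (((1 - p) : ℝ) : ℂ) • (1 : Matrix (Fin 8) (Fin 8) ℂ) := by
    rw [Matrix.conjTranspose_smul, Matrix.conjTranspose_mul,
      Matrix.conjTranspose_conjTranspose, hZH]
    rw [Matrix.smul_mul, Matrix.mul_smul, smul_smul, hcc1]
    congr 1
    calc Z8 * Uex t * ((Uex t)ᴴ * Z8)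
        = Z8 * (Uex t * (Uex t)ᴴ) * Z8 := by
          rw [Matrix.mul_assoc, Matrix.mul_assoc, Matrix.mul_assoc]
      _ = Z8 * Z8 := by rw [hUU, Matrix.mul_one]
      _ = 1 := hZZ
  have htr : ((c₀ • (Uex t)ᴴ)ᴴ * (c₀ • (Uex t)ᴴ)
      + (c₁ • ((Uex t)ᴴ * Z8))ᴴ * (c₁ • ((Uex t)ᴴ * Z8))).trace = (8 : ℂ) := by
    rw [e0, e1, Matrix.trace_add, Matrix.trace_smul, Matrix.trace_smul, Matrix.trace_one]
    simp only [Fintype.card_fin, smul_eq_mul]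
    push_cast
    ring
  have htr0 : (c₀ • (Uex t)ᴴ).trace = ((Real.sqrt p * (6 + 2 * Real.cos t) : ℝ) : ℂ) := by
    rw [Matrix.trace_smul, htrU, hc₀, smul_eq_mul]
    push_cast
    ring
  have htr1 : (c₁ • ((Uex t)ᴴ * Z8)).trace = 0 := by
    rw [Matrix.trace_smul, htrUZ, smul_zero]
  rw [hM0, hM1, htr, htr0, htr1]
  rw [norm_zero]
  rw [Complex.norm_real, Real.norm_eq_abs]
  have habs : |Real.sqrt p * (6 + 2 * Real.cos t)| ^ 2
      = p * (6 + 2 * Real.cos t) ^ 2 := by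
    rw [_root_.sq_abs, mul_pow, Real.sq_sqrt hp₀]
  rw [habs]
  push_cast
  ring
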